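/- (Proposition 3) Let N ≥ 2 be an even integer, let α ∈ ℝ with 0 ≤ α ≤ 1/2, and let p ∈ [0,1] satisfy g_N(p) = B(N/2; N, p) ≤ α. Then for every integer M ≥ N, the Binomial(M, p) majority-vote tail probability satisfies ∑_{i=0}^{M} [2i ≥ M] · (M choose i) p^i (1−p)^{M−i} ≥ 1 − α. That is, a counterfactual explanation that is robust at tolerance α for an ensemble of even size N is robust at tolerance α for any ensemble of larger size. -/
import Mathlib

/-- Binomial cumulative distribution function:
`B(k; N, p) = ∑_{i=0}^{k} (N choose i) p^i (1-p)^(N-i)`. -/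
noncomputable def binCdf (k N : ℕ) (p : ℝ) : ℝ :=
  ∑ i ∈ Finset.range (k + 1), (N.choose i : ℝ) * p ^ i * (1 - p) ^ (N - i)

/-- `g_N(p) = B(⌊N/2⌋; N, p)`. -/
noncomputable def gN (N : ℕ) (p : ℝ) : ℝ := binCdf (N / 2) N p

noncomputable def bterm (p : ℝ) (m i : ℕ) : ℝ :=
  (m.choose i : ℝ) * p ^ i * (1 - p) ^ (m - i)

noncomputable def tailS (p : ℝ) (t m : ℕ) : ℝ :=
  ∑ i ∈ Finset.Ico t (m + 1), bterm p m i

lemma bterm_nonneg {p : ℝ} (hp0 : 0 ≤ p) (hp1 : p ≤ 1) (m i : ℕ) :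
    0 ≤ bterm p m i := by
  have h : (0:ℝ) ≤ 1 - p := by linarith
  unfold bterm; positivity

lemma sum_total {p : ℝ} (m : ℕ) :
    ∑ i ∈ Finset.range (m + 1), bterm p m i = 1 := by
  have h := add_pow p (1 - p) m
  simp only [add_sub_cancel, one_pow] at h
  rw [show (1:ℝ) = ∑ k ∈ Finset.range (m+1), p ^ k * (1-p) ^ (m-k) * (m.choose k : ℝ) from h]
  exact Finset.sum_congr rfl (fun i _ => by unfold bterm; ring)

lemma tailS_rec (p : ℝ) (t m : ℕ) (ht : t ≤ m) :
    tailS p (t + 1) (m + 1) = (1 - p) * tailS p (t + 1) m + p * tailS p t m := by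
  unfold tailS bterm
  rw [Finset.sum_Ico_eq_sum_range, Finset.sum_Ico_eq_sum_range, Finset.sum_Ico_eq_sum_range]
  rw [show m + 1 + 1 - (t + 1) = (m - t) + 1 from by omega,
      show m + 1 - (t + 1) = m - t from by omega,
      show m + 1 - t = (m - t) + 1 from by omega,
      Finset.sum_range_succ, Finset.sum_range_succ,
      show t + 1 + (m - t) = m + 1 from by omega,
      show t + (m - t) = m from by omega]
  have key : ∀ k ∈ Finset.range (m - t),
      ((m+1).choose (t+1+k) : ℝ) * p ^ (t+1+k) * (1-p) ^ (m+1-(t+1+k)) =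
      (1-p) * (((m.choose (t+1+k)) : ℝ) * p ^ (t+1+k) * (1-p) ^ (m-(t+1+k)))
      + p * (((m.choose (t+k)) : ℝ) * p ^ (t+k) * (1-p) ^ (m-(t+k))) := by
    intro k hk
    simp only [Finset.mem_range] at hk
    have c : ((m+1).choose (t+1+k) : ℝ) = (m.choose (t+k) : ℝ) + (m.choose (t+1+k) : ℝ) := by
      rw [show t+1+k = (t+k)+1 from by omega, Nat.choose_succ_succ']
      push_cast; ring
    rw [show m + 1 - (t+1+k) = (m - (t+1+k)) + 1 from by omega,
        show m - (t+k) = (m - (t+1+k)) + 1 from by omega, c,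
        show t+1+k = (t+k)+1 from by omega]
    rw [pow_succ, pow_succ]
    ring
  rw [Finset.sum_congr rfl key, Finset.sum_add_distrib, mul_add, Finset.mul_sum]
  simp only [Nat.choose_self, Nat.cast_one, Nat.sub_self, pow_zero,
    Nat.add_sub_cancel_left, mul_one, one_mul]
  rw [Finset.mul_sum, pow_succ]; ring

lemma tailS_split (p : ℝ) {t m : ℕ} (h : t ≤ m) :
    tailS p t m = bterm p m t + tailS p (t + 1) m := by
  unfold tailS
  rw [Finset.sum_eq_sum_Ico_succ_bot (by omega : t < m + 1)]

lemma tailS_anti {p : ℝ} (hp0 : 0 ≤ p) (hp1 : p ≤ 1) {t t' : ℕ} (h : t ≤ t') (m : ℕ) :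
    tailS p t' m ≤ tailS p t m :=
  Finset.sum_le_sum_of_subset_of_nonneg (Finset.Ico_subset_Ico h le_rfl)
    (fun i _ _ => bterm_nonneg hp0 hp1 m i)

lemma step_odd {p : ℝ} (hp0 : 0 ≤ p) (hp1 : p ≤ 1) (n : ℕ) :
    tailS p (n + 1) (2 * n) ≤ tailS p (n + 1) (2 * n + 1) := by
  rw [tailS_rec p n (2 * n) (by omega), tailS_split p (by omega : n ≤ 2 * n)]
  have hb := bterm_nonneg hp0 hp1 (2 * n) n
  nlinarith [bterm_nonneg hp0 hp1 (2 * n) n]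

lemma step_two {p : ℝ} (hp : 1 / 2 ≤ p) (hp1 : p ≤ 1) {n : ℕ} (hn : 1 ≤ n) :
    tailS p (n + 1) (2 * n) ≤ tailS p (n + 2) (2 * n + 2) := by
  have hp0 : (0:ℝ) ≤ p := by linarith
  have hq0 : (0:ℝ) ≤ 1 - p := by linarith
  have r1 : tailS p (n + 2) (2 * n + 2) =
      (1 - p) * tailS p (n + 2) (2 * n + 1) + p * tailS p (n + 1) (2 * n + 1) :=
    tailS_rec p (n + 1) (2 * n + 1) (by omega)
  have r2 : tailS p (n + 2) (2 * n + 1) =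
      (1 - p) * tailS p (n + 2) (2 * n) + p * tailS p (n + 1) (2 * n) :=
    tailS_rec p (n + 1) (2 * n) (by omega)
  have r3 : tailS p (n + 1) (2 * n + 1) =
      (1 - p) * tailS p (n + 1) (2 * n) + p * tailS p n (2 * n) :=
    tailS_rec p n (2 * n) (by omega)
  have s1 : tailS p (n + 1) (2 * n) = bterm p (2 * n) (n + 1) + tailS p (n + 2) (2 * n) :=
    tailS_split p (by omega)
  have s2 : tailS p n (2 * n) = bterm p (2 * n) n + tailS p (n + 1) (2 * n) :=
    tailS_split p (by omega)
  -- key inequality: (1-p)^2 * A ≤ p^2 * B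
  have hA : bterm p (2 * n) (n + 1) = (2 * n).choose (n + 1) * p ^ (n + 1) * (1 - p) ^ (n - 1) := by
    unfold bterm; rw [show 2 * n - (n + 1) = n - 1 from by omega]
  have hB : bterm p (2 * n) n = (2 * n).choose n * p ^ n * (1 - p) ^ n := by
    unfold bterm; rw [show 2 * n - n = n from by omega]
  have hc : ((2 * n).choose (n + 1) : ℝ) ≤ ((2 * n).choose n : ℝ) := by
    have := Nat.choose_le_middle (n + 1) (2 * n)
    rw [show 2 * n / 2 = n from by omega] at this
    exact_mod_cast this
  have key : (1 - p) ^ 2 * bterm p (2 * n) (n + 1) ≤ p ^ 2 * bterm p (2 * n) n := by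
    rw [hA, hB]
    have e1 : (1 - p) ^ 2 * (((2 * n).choose (n + 1) : ℝ) * p ^ (n + 1) * (1 - p) ^ (n - 1))
        = (((2 * n).choose (n + 1) : ℝ) * (1 - p)) * (p ^ (n + 1) * (1 - p) ^ n) := by
      have epow : (1 - p) ^ n = (1 - p) ^ (n - 1) * (1 - p) := by
        rw [← pow_succ]; congr 1; omega
      rw [epow]; ring
    have e2 : p ^ 2 * (((2 * n).choose n : ℝ) * p ^ n * (1 - p) ^ n)
        = (((2 * n).choose n : ℝ) * p) * (p ^ (n + 1) * (1 - p) ^ n) := by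
      rw [pow_succ]; ring
    rw [e1, e2]
    apply mul_le_mul_of_nonneg_right _ (by positivity)
    apply mul_le_mul hc (by linarith) hq0 (Nat.cast_nonneg _)
  nlinarith [key]

lemma cdf_add_tail {p : ℝ} {n : ℕ} :
    binCdf n (2 * n) p + tailS p (n + 1) (2 * n) = 1 := by
  unfold binCdf tailS bterm
  rw [Finset.range_eq_Ico]
  rw [Finset.sum_Ico_consecutive (fun i => ((2*n).choose i : ℝ) * p ^ i * (1-p) ^ (2*n - i))
    (by omega : 0 ≤ n + 1) (by omega : n + 1 ≤ 2 * n + 1)]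
  rw [← Finset.range_eq_Ico]
  exact sum_total (2 * n)

lemma half_le_p {n : ℕ} (hn : 1 ≤ n) {α p : ℝ} (hα1 : α ≤ 1 / 2)
    (hp0 : 0 ≤ p) (hp1 : p ≤ 1) (h : binCdf n (2 * n) p ≤ α) : 1 / 2 ≤ p := by
  by_contra hc
  push_neg at hc
  have hple : p ≤ 1 - p := by linarith
  -- reflection: the upper tail from n is at most the cdf up to n
  have refl : tailS p n (2 * n) ≤ binCdf n (2 * n) p := by
    unfold tailS binCdf bterm
    rw [Finset.sum_Ico_eq_sum_range]
    rw [show 2 * n + 1 - n = n + 1 from by omega]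
    rw [show (∑ i ∈ Finset.range (n + 1), ((2*n).choose i : ℝ) * p ^ i * (1-p) ^ (2*n - i))
        = ∑ k ∈ Finset.range (n + 1), ((2*n).choose (n - k) : ℝ) * p ^ (n - k) * (1-p) ^ (2*n - (n - k)) from
      (Finset.sum_range_reflect (fun i => ((2*n).choose i : ℝ) * p ^ i * (1-p) ^ (2*n - i)) (n+1)).symm.trans
        (Finset.sum_congr rfl (fun k hk => by
          simp only [Finset.mem_range] at hk
          rw [show n + 1 - 1 - k = n - k from by omega]))]
    apply Finset.sum_le_sum
    intro k hk
    simp only [Finset.mem_range] at hk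
    have hkn : k ≤ n := by omega
    have hch : (2*n).choose (n + k) = (2*n).choose (n - k) := by
      rw [show n + k = 2*n - (n - k) from by omega]
      exact Nat.choose_symm (by omega)
    rw [hch, show 2*n - (n + k) = n - k from by omega,
        show n + k = (n - k) + 2*k from by omega,
        show 2*n - (n - k) = (n - k) + 2*k from by omega,
        pow_add, pow_add]
    have hpk : p ^ (2*k) ≤ (1 - p) ^ (2*k) := pow_le_pow_left₀ hp0 hple _
    have hq0 : (0:ℝ) ≤ 1 - p := by linarith
    have h1 : (0:ℝ) ≤ ((2*n).choose (n - k) : ℝ) * p ^ (n - k) * (1-p) ^ (n - k) := by positivity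
    nlinarith [mul_le_mul_of_nonneg_left hpk h1]
  have hsplit : tailS p n (2*n) = bterm p (2*n) n + tailS p (n+1) (2*n) :=
    tailS_split p (by omega)
  have htot := cdf_add_tail (p := p) (n := n)
  have hb0 : 0 ≤ bterm p (2*n) n := bterm_nonneg hp0 hp1 (2*n) n
  have hbz : bterm p (2*n) n = 0 := by linarith
  have hCne : (0:ℝ) < ((2*n).choose n : ℝ) := by
    exact_mod_cast Nat.choose_pos (by omega : n ≤ 2*n)
  have hpz : p = 0 := by
    unfold bterm at hbz
    rw [show 2*n - n = n from by omega] at hbz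
    rcases mul_eq_zero.1 hbz with h' | h'
    · rcases mul_eq_zero.1 h' with h'' | h''
      · exact absurd h'' (by positivity)
      · exact pow_eq_zero_iff (by omega) |>.1 h''
    · have : (1:ℝ) - p = 0 := pow_eq_zero_iff (by omega) |>.1 h'
      linarith
  -- with p = 0 the cdf equals at least its first term, which is 1
  have hone : (1:ℝ) ≤ binCdf n (2*n) p := by
    subst hpz
    unfold binCdf
    have := Finset.single_le_sum (f := fun i => ((2*n).choose i : ℝ) * (0:ℝ) ^ i * (1-0) ^ (2*n - i))
      (fun i _ => by positivity) (Finset.mem_range.2 (by omega : 0 < n + 1))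
    simpa using this
  linarith

theorem robust_for_larger_ensembles (N : ℕ) (hN : 2 ≤ N) (hNeven : Even N)
    (α : ℝ) (hα0 : 0 ≤ α) (hα1 : α ≤ 1 / 2)
    (p : ℝ) (hp0 : 0 ≤ p) (hp1 : p ≤ 1) (h : gN N p ≤ α) :
    ∀ M : ℕ, N ≤ M →
      1 - α ≤
        ∑ i ∈ (Finset.range (M + 1)).filter (fun i => M ≤ 2 * i),
          (M.choose i : ℝ) * p ^ i * (1 - p) ^ (M - i) := by
  intro M hM
  obtain ⟨n, hn2⟩ := hNeven
  have hN2 : N = 2 * n := by omega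
  subst hN2
  have hn1 : 1 ≤ n := by omega
  have hgN : gN (2 * n) p = binCdf n (2 * n) p := by
    unfold gN
    rw [show 2 * n / 2 = n from by omega]
  rw [hgN] at h
  have hp : 1 / 2 ≤ p := half_le_p hn1 hα1 hp0 hp1 h
  have claim : ∀ k, tailS p (n + 1) (2 * n) ≤ tailS p ((2 * n + k) / 2 + 1) (2 * n + k) := by
    intro k
    induction k using Nat.strong_induction_on with
    | _ k ih =>
      match k with
      | 0 =>
        rw [show (2 * n + 0) / 2 + 1 = n + 1 from by omega, show 2 * n + 0 = 2 * n from by omega]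
      | 1 =>
        rw [show (2 * n + 1) / 2 + 1 = n + 1 from by omega]
        exact step_odd hp0 hp1 n
      | (j + 2) =>
        rcases Nat.even_or_odd j with ⟨m', hj⟩ | ⟨m', hj⟩
        · calc tailS p (n + 1) (2 * n)
              ≤ tailS p ((2 * n + j) / 2 + 1) (2 * n + j) := ih j (by omega)
            _ = tailS p ((n + m') + 1) (2 * (n + m')) := by
                rw [show (2 * n + j) / 2 + 1 = (n + m') + 1 from by omega,
                    show 2 * n + j = 2 * (n + m') from by omega]
            _ ≤ tailS p ((n + m') + 2) (2 * (n + m') + 2) := step_two hp hp1 (by omega)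
            _ = tailS p ((2 * n + (j + 2)) / 2 + 1) (2 * n + (j + 2)) := by
                rw [show (2 * n + (j + 2)) / 2 + 1 = (n + m') + 2 from by omega,
                    show 2 * n + (j + 2) = 2 * (n + m') + 2 from by omega]
        · calc tailS p (n + 1) (2 * n)
              ≤ tailS p ((2 * n + (j + 1)) / 2 + 1) (2 * n + (j + 1)) := ih (j + 1) (by omega)
            _ = tailS p ((n + m' + 1) + 1) (2 * (n + m' + 1)) := by
                rw [show (2 * n + (j + 1)) / 2 + 1 = (n + m' + 1) + 1 from by omega,
                    show 2 * n + (j + 1) = 2 * (n + m' + 1) from by omega]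
            _ ≤ tailS p ((n + m' + 1) + 1) (2 * (n + m' + 1) + 1) := step_odd hp0 hp1 _
            _ = tailS p ((2 * n + (j + 2)) / 2 + 1) (2 * n + (j + 2)) := by
                rw [show (2 * n + (j + 2)) / 2 + 1 = (n + m' + 1) + 1 from by omega,
                    show 2 * n + (j + 2) = 2 * (n + m' + 1) + 1 from by omega]
  have hclaimM : tailS p (n + 1) (2 * n) ≤ tailS p (M / 2 + 1) M := by
    have := claim (M - 2 * n)
    rwa [show 2 * n + (M - 2 * n) = M from by omega] at this
  have hset : (Finset.range (M + 1)).filter (fun i => M ≤ 2 * i)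
      = Finset.Ico ((M + 1) / 2) (M + 1) := by
    ext i
    simp only [Finset.mem_filter, Finset.mem_Ico, Finset.mem_range]
    omega
  rw [hset]
  have hgoal : (∑ i ∈ Finset.Ico ((M + 1) / 2) (M + 1),
      (M.choose i : ℝ) * p ^ i * (1 - p) ^ (M - i)) = tailS p ((M + 1) / 2) M := rfl
  rw [hgoal]
  have h2 : tailS p (M / 2 + 1) M ≤ tailS p ((M + 1) / 2) M :=
    tailS_anti hp0 hp1 (by omega) M
  have h3 : binCdf n (2 * n) p + tailS p (n + 1) (2 * n) = 1 := cdf_add_tail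
  linarith
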